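/- Let Γ be a lattice in ℝ^d and S ⊆ Γ with existing autocorrelation coefficients η_S(z) = dens(S ∩ (z+S)). If dens(S) = dens(Γ)/2, then S and its complement S^c = Γ \ S are homometric, i.e., η_S(z) = η_{S^c}(z) for all z ∈ ℝ^d. -/

import Mathlib

open Filter MeasureTheory

/-- Volume of the ball of radius `n` around `0` in `ℝ^d`. -/
noncomputable def ballVol (d : ℕ) (n : ℕ) : ℝ :=
  (volume (Metric.ball (0 : Fin d → ℝ) (n : ℝ))).toReal

/-- `T` has natural density `c` (along balls of radius `n` around `0`). -/
def HasDens {d : ℕ} (T : Set (Fin d → ℝ)) (c : ℝ) : Prop :=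
  Tendsto (fun n : ℕ => ((T ∩ Metric.ball 0 (n : ℝ)).ncard : ℝ) / ballVol d n)
    atTop (nhds c)

/-- `T` has autocorrelation coefficient `c` at `z`. -/
def HasAutocorr {d : ℕ} (T : Set (Fin d → ℝ)) (z : Fin d → ℝ) (c : ℝ) : Prop :=
  Tendsto
    (fun n : ℕ => (({x | x ∈ T ∧ x ∈ Metric.ball 0 (n : ℝ) ∧ x - z ∈ T}).ncard : ℝ)
      / ballVol d n) atTop (nhds c)

namespace HalfDens

noncomputable def cUnit (d : ℕ) : ℝ := (volume (Metric.ball (0 : Fin d → ℝ) 1)).toReal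

lemma cUnit_pos (d : ℕ) : 0 < cUnit d :=
  ENNReal.toReal_pos (Metric.measure_ball_pos volume 0 one_pos).ne' (measure_ball_lt_top).ne

lemma ballVol_eq (d : ℕ) {n : ℕ} (hn : 1 ≤ n) : ballVol d n = (n:ℝ)^d * cUnit d := by
  have h : (0:ℝ) < n := by exact_mod_cast hn
  rw [ballVol, Measure.addHaar_ball_of_pos volume 0 h, ENNReal.toReal_mul,
    ENNReal.toReal_ofReal (by positivity)]
  congr 2
  simp

lemma ballVol_pos (d : ℕ) {n : ℕ} (hn : 1 ≤ n) : 0 < ballVol d n := by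
  rw [ballVol_eq d hn]
  have h : (0:ℝ) < n := by exact_mod_cast hn
  exact mul_pos (by positivity) (cUnit_pos d)

lemma ballVol_ratio_aux (d : ℕ) (φ : ℕ → ℕ) (hφ : ∀ᶠ n in atTop, 1 ≤ φ n)
    (h : Tendsto (fun n : ℕ => ((φ n : ℝ)) / n) atTop (nhds 1)) :
    Tendsto (fun n : ℕ => ballVol d (φ n) / ballVol d n) atTop (nhds 1) := by
  have h2 : Tendsto (fun n : ℕ => (((φ n : ℝ)) / n) ^ d) atTop (nhds 1) := by
    simpa using h.pow d
  refine h2.congr' ?_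
  filter_upwards [hφ, eventually_ge_atTop 1] with n h1 hn
  rw [ballVol_eq d h1, ballVol_eq d hn, mul_div_mul_comm, div_self (cUnit_pos d).ne',
    mul_one, div_pow]

lemma ballVol_ratio_sub (d k : ℕ) :
    Tendsto (fun n : ℕ => ballVol d (n - k) / ballVol d n) atTop (nhds 1) := by
  refine ballVol_ratio_aux d (· - k) ?_ ?_
  · filter_upwards [eventually_ge_atTop (k+1)] with n hn; omega
  · have : Tendsto (fun n : ℕ => 1 - (k:ℝ)/n) atTop (nhds 1) := by
      simpa using tendsto_const_nhds.sub (tendsto_const_div_atTop_nhds_zero_nat (k:ℝ))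
    refine this.congr' ?_
    filter_upwards [eventually_ge_atTop (k+1)] with n hn
    have hn0 : (n:ℝ) ≠ 0 := Nat.cast_ne_zero.mpr (by omega)
    rw [Nat.cast_sub (by omega), sub_div, div_self hn0]

lemma ballVol_ratio_add (d k : ℕ) :
    Tendsto (fun n : ℕ => ballVol d (n + k) / ballVol d n) atTop (nhds 1) := by
  refine ballVol_ratio_aux d (· + k) (by filter_upwards [eventually_ge_atTop 1] with n hn; omega) ?_
  have : Tendsto (fun n : ℕ => 1 + (k:ℝ)/n) atTop (nhds 1) := by
    simpa using tendsto_const_nhds.add (tendsto_const_div_atTop_nhds_zero_nat (k:ℝ))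
  refine this.congr' ?_
  filter_upwards [eventually_ge_atTop 1] with n hn
  have hn0 : (n:ℝ) ≠ 0 := by positivity
  rw [Nat.cast_add, add_div, div_self hn0]

/-- Density computed along shifted balls. -/
lemma shifted_count_tendsto {d : ℕ} (S : Set (Fin d → ℝ))
    (hfin : ∀ (w : Fin d → ℝ) (R : ℝ), (S ∩ Metric.ball w R).Finite)
    {dS : ℝ} (hdS : HasDens S dS) (z : Fin d → ℝ) :
    Tendsto (fun n : ℕ => (({x | x ∈ Metric.ball (0 : Fin d → ℝ) (n:ℝ) ∧ x - z ∈ S}).ncard : ℝ)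
      / ballVol d n) atTop (nhds dS) := by
  set k : ℕ := ⌈‖z‖⌉₊ with hk
  have hzk : ‖z‖ ≤ (k:ℝ) := Nat.le_ceil _
  -- rewrite the count as a count over a shifted ball
  have hcount : ∀ n : ℕ, ({x | x ∈ Metric.ball (0 : Fin d → ℝ) (n:ℝ) ∧ x - z ∈ S}).ncard
      = (S ∩ Metric.ball (-z) (n:ℝ)).ncard := by
    intro n
    have himg : {x | x ∈ Metric.ball (0 : Fin d → ℝ) (n:ℝ) ∧ x - z ∈ S}
        = (· + z) '' (S ∩ Metric.ball (-z) (n:ℝ)) := by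
      ext x
      simp only [Set.mem_setOf_eq, Set.mem_image, Set.mem_inter_iff, Metric.mem_ball]
      constructor
      · rintro ⟨hb, hs⟩
        exact ⟨x - z, ⟨hs, by simpa [dist_eq_norm] using hb⟩, by abel⟩
      · rintro ⟨y, ⟨hy, hb⟩, rfl⟩
        refine ⟨by simpa [dist_eq_norm] using hb, by simpa using hy⟩
    rw [himg, Set.ncard_image_of_injective _ (add_left_injective z)]
  -- inclusions
  have hsub1 : ∀ n : ℕ, S ∩ Metric.ball 0 ((n - k : ℕ) : ℝ) ⊆ S ∩ Metric.ball (-z) (n:ℝ) := by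
    rintro n x ⟨hs, hb⟩
    refine ⟨hs, ?_⟩
    rw [Metric.mem_ball, dist_zero_right] at hb
    rw [Metric.mem_ball, dist_eq_norm, sub_neg_eq_add]
    rcases le_or_gt k n with h | h
    · have hc : ((n - k : ℕ) : ℝ) = (n : ℝ) - k := by
        rw [Nat.cast_sub h]
      calc ‖x + z‖ ≤ ‖x‖ + ‖z‖ := norm_add_le _ _
        _ < (n : ℝ) := by rw [hc] at hb; linarith
    · exfalso
      have h0 : (n - k : ℕ) = 0 := by omega
      rw [h0] at hb
      simp only [Nat.cast_zero] at hb
      linarith [norm_nonneg x]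
  have hsub2 : ∀ n : ℕ, S ∩ Metric.ball (-z) (n:ℝ) ⊆ S ∩ Metric.ball 0 ((n + k : ℕ) : ℝ) := by
    rintro n x ⟨hs, hb⟩
    refine ⟨hs, ?_⟩
    rw [Metric.mem_ball, dist_eq_norm, sub_neg_eq_add] at hb
    rw [Metric.mem_ball, dist_zero_right, Nat.cast_add]
    calc ‖x‖ ≤ ‖x + z‖ + ‖z‖ := by
          simpa using norm_sub_le (x + z) z
      _ < (n : ℝ) + k := by linarith
  -- squeezing
  have hlow : Tendsto (fun n : ℕ => ((S ∩ Metric.ball (0 : Fin d → ℝ) ((n - k : ℕ) : ℝ)).ncard : ℝ)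
      / ballVol d n) atTop (nhds dS) := by
    have h1 : Tendsto (fun n : ℕ =>
        ((S ∩ Metric.ball (0 : Fin d → ℝ) ((n - k : ℕ) : ℝ)).ncard : ℝ) / ballVol d (n - k))
        atTop (nhds dS) := hdS.comp (tendsto_sub_atTop_nat k)
    have h2 := h1.mul (ballVol_ratio_sub d k)
    rw [mul_one] at h2
    refine h2.congr' ?_
    filter_upwards [eventually_ge_atTop (k+1)] with n hn
    have hv : ballVol d (n - k) ≠ 0 := (ballVol_pos d (by omega)).ne'
    field_simp
  have hhigh : Tendsto (fun n : ℕ => ((S ∩ Metric.ball (0 : Fin d → ℝ) ((n + k : ℕ) : ℝ)).ncard : ℝ)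
      / ballVol d n) atTop (nhds dS) := by
    have h1 : Tendsto (fun n : ℕ =>
        ((S ∩ Metric.ball (0 : Fin d → ℝ) ((n + k : ℕ) : ℝ)).ncard : ℝ) / ballVol d (n + k))
        atTop (nhds dS) := hdS.comp (tendsto_add_atTop_nat k)
    have h2 := h1.mul (ballVol_ratio_add d k)
    rw [mul_one] at h2
    refine h2.congr' ?_
    filter_upwards [eventually_ge_atTop 1] with n hn
    have hv : ballVol d (n + k) ≠ 0 := (ballVol_pos d (by omega)).ne'
    field_simp
  refine tendsto_of_tendsto_of_tendsto_of_le_of_le' hlow hhigh ?_ ?_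
  · filter_upwards [eventually_ge_atTop 1] with n hn
    rw [hcount]
    have hv : (0:ℝ) < ballVol d n := ballVol_pos d hn
    have hmono : (S ∩ Metric.ball 0 ((n - k : ℕ) : ℝ)).ncard
        ≤ (S ∩ Metric.ball (-z) (n:ℝ)).ncard :=
      Set.ncard_le_ncard (hsub1 n) (hfin _ _)
    gcongr
  · filter_upwards [eventually_ge_atTop 1] with n hn
    rw [hcount]
    have hv : (0:ℝ) < ballVol d n := ballVol_pos d hn
    have hmono : (S ∩ Metric.ball (-z) (n:ℝ)).ncard
        ≤ (S ∩ Metric.ball 0 ((n + k : ℕ) : ℝ)).ncard :=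
      Set.ncard_le_ncard (hsub2 n) (hfin _ _)
    gcongr

end HalfDens

/-- if `S ⊆ Γ` has density `dens(Γ)/2`, then `S` and its
complement `S^c = Γ \ S` are homometric: `η_S(z) = η_{S^c}(z)` for all `z`. -/
theorem half_density_homometric (d : ℕ) (Γ : AddSubgroup (Fin d → ℝ))
    (hdisc : DiscreteTopology Γ)
    (hcocompact : CompactSpace ((Fin d → ℝ) ⧸ Γ))
    (S : Set (Fin d → ℝ)) (hS : S ⊆ (Γ : Set (Fin d → ℝ)))
    (ηS ηSc : (Fin d → ℝ) → ℝ)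
    (hηS : ∀ z ∈ (Γ : Set (Fin d → ℝ)), HasAutocorr S z (ηS z))
    (hηSc : ∀ z ∈ (Γ : Set (Fin d → ℝ)),
      HasAutocorr ((Γ : Set (Fin d → ℝ)) \ S) z (ηSc z))
    (hηS0 : ∀ z ∉ (Γ : Set (Fin d → ℝ)), ηS z = 0)
    (hηSc0 : ∀ z ∉ (Γ : Set (Fin d → ℝ)), ηSc z = 0)
    (dS dΓ : ℝ) (hdS : HasDens S dS)
    (hdΓ : HasDens (Γ : Set (Fin d → ℝ)) dΓ)
    (hhalf : dS = dΓ / 2) :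
    ∀ z : Fin d → ℝ, ηS z = ηSc z := by
  intro z
  by_cases hz : z ∈ (Γ : Set (Fin d → ℝ))
  swap
  · rw [hηS0 z hz, hηSc0 z hz]
  haveI : DiscreteTopology (↥(Γ : Set (Fin d → ℝ))) := hdisc
  have hΓclosed : IsClosed (Γ : Set (Fin d → ℝ)) := AddSubgroup.isClosed_of_discrete
  have hfinΓ : ∀ (w : Fin d → ℝ) (R : ℝ), ((Γ : Set (Fin d → ℝ)) ∩ Metric.ball w R).Finite := by
    intro w R
    rw [Set.inter_comm]
    exact Metric.finite_isBounded_inter_isClosed DiscreteTopology.isDiscrete Metric.isBounded_ball hΓclosed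
  have hfinS : ∀ (w : Fin d → ℝ) (R : ℝ), (S ∩ Metric.ball w R).Finite := fun w R =>
    (hfinΓ w R).subset (Set.inter_subset_inter_left _ hS)
  have key : ∀ n : ℕ,
      (({x | x ∈ ((Γ : Set (Fin d → ℝ)) \ S) ∧ x ∈ Metric.ball 0 (n:ℝ)
          ∧ x - z ∈ ((Γ : Set (Fin d → ℝ)) \ S)}).ncard : ℝ)
      = (((Γ : Set (Fin d → ℝ)) ∩ Metric.ball 0 (n:ℝ)).ncard : ℝ)
        + (({x | x ∈ S ∧ x ∈ Metric.ball 0 (n:ℝ) ∧ x - z ∈ S}).ncard : ℝ)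
        - ((S ∩ Metric.ball 0 (n:ℝ)).ncard : ℝ)
        - (({x | x ∈ Metric.ball (0 : Fin d → ℝ) (n:ℝ) ∧ x - z ∈ S}).ncard : ℝ) := by
    intro n
    set B := Metric.ball (0 : Fin d → ℝ) (n:ℝ) with hB
    set G := (Γ : Set (Fin d → ℝ)) ∩ B with hG
    set P := {x : Fin d → ℝ | x - z ∈ S} with hP
    have hGfin : G.Finite := hfinΓ 0 n
    have hmemΓ : ∀ {x : Fin d → ℝ}, x - z ∈ S → x ∈ (Γ : Set (Fin d → ℝ)) := by
      intro x hx
      have h1 : x - z ∈ Γ := hS hx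
      have h2 := add_mem h1 hz
      simpa using h2
    have hsubΓ : ∀ {x : Fin d → ℝ}, x ∈ (Γ : Set (Fin d → ℝ)) → x - z ∈ (Γ : Set (Fin d → ℝ)) :=
      fun hx => sub_mem hx hz
    have eM : G ∩ P = {x | x ∈ B ∧ x - z ∈ S} := by
      ext x
      simp only [hG, hP, Set.mem_inter_iff, Set.mem_setOf_eq]
      exact ⟨fun ⟨⟨_, hb⟩, hp⟩ => ⟨hb, hp⟩, fun ⟨hb, hp⟩ => ⟨⟨hmemΓ hp, hb⟩, hp⟩⟩
    have eE : (G \ P) \ S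
        = {x | x ∈ ((Γ : Set (Fin d → ℝ)) \ S) ∧ x ∈ B
            ∧ x - z ∈ ((Γ : Set (Fin d → ℝ)) \ S)} := by
      ext x
      simp only [hG, hP, Set.mem_diff, Set.mem_inter_iff, Set.mem_setOf_eq]
      constructor
      · rintro ⟨⟨⟨hΓx, hb⟩, hp⟩, hs⟩
        exact ⟨⟨hΓx, hs⟩, hb, hsubΓ hΓx, hp⟩
      · rintro ⟨⟨hΓx, hs⟩, hb, _, hp⟩
        exact ⟨⟨⟨hΓx, hb⟩, hp⟩, hs⟩
    have eNSP : (S ∩ B) ∩ P = {x | x ∈ S ∧ x ∈ B ∧ x - z ∈ S} := by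
      ext x; simp only [hP, Set.mem_inter_iff, Set.mem_setOf_eq]; tauto
    have eNSD : (S ∩ B) \ P = (G \ P) ∩ S := by
      ext x
      simp only [hG, hP, Set.mem_diff, Set.mem_inter_iff, Set.mem_setOf_eq]
      constructor
      · rintro ⟨⟨hs, hb⟩, hp⟩
        exact ⟨⟨⟨hS hs, hb⟩, hp⟩, hs⟩
      · rintro ⟨⟨⟨_, hb⟩, hp⟩, hs⟩
        exact ⟨⟨hs, hb⟩, hp⟩
    have e1 := Set.ncard_inter_add_ncard_diff_eq_ncard G P hGfin
    rw [eM] at e1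
    have e3 := Set.ncard_inter_add_ncard_diff_eq_ncard (G \ P) S (hGfin.subset Set.diff_subset)
    rw [eE] at e3
    have e4 := Set.ncard_inter_add_ncard_diff_eq_ncard (S ∩ B) P
      (hGfin.subset (Set.inter_subset_inter_left _ hS))
    rw [eNSP, eNSD] at e4
    have r1 : (({x | x ∈ B ∧ x - z ∈ S}).ncard : ℝ) + ((G \ P).ncard : ℝ) = (G.ncard : ℝ) := by
      exact_mod_cast e1
    have r3 : (((G \ P) ∩ S).ncard : ℝ)
        + (({x | x ∈ ((Γ : Set (Fin d → ℝ)) \ S) ∧ x ∈ B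
            ∧ x - z ∈ ((Γ : Set (Fin d → ℝ)) \ S)}).ncard : ℝ) = ((G \ P).ncard : ℝ) := by
      exact_mod_cast e3
    have r4 : (({x | x ∈ S ∧ x ∈ B ∧ x - z ∈ S}).ncard : ℝ) + (((G \ P) ∩ S).ncard : ℝ)
        = ((S ∩ B).ncard : ℝ) := by
      exact_mod_cast e4
    linarith
  have hM := HalfDens.shifted_count_tendsto S hfinS hdS z
  have hA : Tendsto (fun n : ℕ =>
      (({x | x ∈ S ∧ x ∈ Metric.ball 0 (n : ℝ) ∧ x - z ∈ S}).ncard : ℝ) / ballVol d n)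
      atTop (nhds (ηS z)) := hηS z hz
  have hGd : Tendsto (fun n : ℕ =>
      ((((Γ : Set (Fin d → ℝ)) ∩ Metric.ball 0 (n : ℝ)).ncard : ℝ)) / ballVol d n)
      atTop (nhds dΓ) := hdΓ
  have hNS : Tendsto (fun n : ℕ =>
      (((S ∩ Metric.ball 0 (n : ℝ)).ncard : ℝ)) / ballVol d n) atTop (nhds dS) := hdS
  have combo := ((hGd.add hA).sub hNS).sub hM
  have hE : Tendsto (fun n : ℕ =>
      (({x | x ∈ ((Γ : Set (Fin d → ℝ)) \ S) ∧ x ∈ Metric.ball 0 (n : ℝ)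
          ∧ x - z ∈ ((Γ : Set (Fin d → ℝ)) \ S)}).ncard : ℝ) / ballVol d n)
      atTop (nhds (dΓ + ηS z - dS - dS)) := by
    refine combo.congr fun n => ?_
    rw [key n, sub_div, sub_div, add_div]
  have huniq := tendsto_nhds_unique hE (hηSc z hz)
  linarith
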